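/- Let (E, L, E) be a labeled space. If (E, L, E) is disagreeable (for every nonempty A ∈ E and every labeled path β, there is n ≥ 1 with L(AE^{|β|n}) ≠ {βⁿ}), then every loop in (E, L, E) has an exit. -/

import Mathlib

universe u v

variable {V : Type u} {Λ : Type v}

/-- The relative range `r(S, α)` of a set of vertices along a labeled path. -/
def relRange (Edge : V → Λ → V → Prop) : Set V → List Λ → Set V
  | S, [] => S
  | S, a :: α => relRange Edge {w | ∃ u ∈ S, Edge u a w} α

/-- The range `r(α)` of a labeled path. -/
def lrange (Edge : V → Λ → V → Prop) (α : List Λ) : Set V :=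
  relRange Edge Set.univ α

/-- `α` is a (nonempty) labeled path of the labeled graph. -/
def IsLP (Edge : V → Λ → V → Prop) (α : List Λ) : Prop :=
  α ≠ [] ∧ (lrange Edge α).Nonempty

/-- `L(SE¹)`: labels of edges emitted from `S`. -/
def edgeLabels (Edge : V → Λ → V → Prop) (S : Set V) : Set Λ :=
  {a | ∃ u ∈ S, ∃ w, Edge u a w}

/-- `S` is regular: every nonempty `B ∈ ℬ` with `B ⊆ S` emits a finite nonzero set of labels. -/
def RegularSet (Edge : V → Λ → V → Prop) (ℬ : Set (Set V)) (S : Set V) : Prop :=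
  ∀ B ∈ ℬ, B ⊆ S → B.Nonempty →
    (edgeLabels Edge B).Finite ∧ (edgeLabels Edge B).Nonempty

/-- `H ⊆ ℬ` is hereditary. -/
def Hered (Edge : V → Λ → V → Prop) (ℬ H : Set (Set V)) : Prop :=
  H ⊆ ℬ ∧ (∀ A ∈ H, ∀ α : List Λ, IsLP Edge α → relRange Edge A α ∈ H) ∧
    (∀ A ∈ H, ∀ B ∈ H, A ∪ B ∈ H) ∧ (∀ A ∈ H, ∀ B ∈ ℬ, B ⊆ A → B ∈ H)

/-- `H` is saturated. -/
def Satur (Edge : V → Λ → V → Prop) (ℬ H : Set (Set V)) : Prop :=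
  ∀ A ∈ ℬ, RegularSet Edge ℬ A →
    (∀ α : List Λ, IsLP Edge α → relRange Edge A α ∈ H) → A ∈ H

/-- `H(A)`: sets covered by finitely many relative ranges `r(A, αᵢ)`, `αᵢ ∈ L^#(E)`. -/
def HSet (Edge : V → Λ → V → Prop) (ℬ : Set (Set V)) (A : Set V) : Set (Set V) :=
  {B ∈ ℬ | ∃ l : List (List Λ), (∀ α ∈ l, α = [] ∨ IsLP Edge α) ∧
    B ⊆ ⋃ α ∈ l, relRange Edge A α}

/-- `S(H(A))`: the saturation of `H(A)`. -/
def SHSet (Edge : V → Λ → V → Prop) (ℬ : Set (Set V)) (A : Set V) : Set (Set V) :=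
  {B ∈ ℬ | ∃ n : ℕ,
    (∀ β : List Λ, (β = [] ∨ IsLP Edge β) → β.length = n →
      relRange Edge B β ∈ HSet Edge ℬ A) ∧
    (∀ γ : List Λ, (γ = [] ∨ IsLP Edge γ) → γ.length < n →
      ∃ C ∈ HSet Edge ℬ A, ∃ D ∈ ℬ, RegularSet Edge ℬ D ∧ relRange Edge B γ = C ∪ D)}

/-- `ℬ` is an accommodating set for the labeled graph. -/
def Accommodating (Edge : V → Λ → V → Prop) (ℬ : Set (Set V)) : Prop :=
  (∀ α : List Λ, IsLP Edge α → lrange Edge α ∈ ℬ) ∧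
    (∀ A ∈ ℬ, ∀ α : List Λ, IsLP Edge α → relRange Edge A α ∈ ℬ) ∧
    (∀ A ∈ ℬ, ∀ B ∈ ℬ, A ∪ B ∈ ℬ) ∧ (∀ A ∈ ℬ, ∀ B ∈ ℬ, A ∩ B ∈ ℬ)

/-- `ℬ` is non-degenerate: closed under relative complements (and contains `∅`). -/
def NonDegenerate (ℬ : Set (Set V)) : Prop :=
  (∅ : Set V) ∈ ℬ ∧ ∀ A ∈ ℬ, ∀ B ∈ ℬ, A \ B ∈ ℬ

/-- The labeled space is weakly left-resolving. -/
def WLR (Edge : V → Λ → V → Prop) (ℬ : Set (Set V)) : Prop :=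
  ∀ A ∈ ℬ, ∀ B ∈ ℬ, ∀ α : List Λ, IsLP Edge α →
    relRange Edge (A ∩ B) α = relRange Edge A α ∩ relRange Edge B α

/-- `ℬ` is the smallest non-degenerate accommodating set. -/
def SmallestAccom (Edge : V → Λ → V → Prop) (ℬ : Set (Set V)) : Prop :=
  Accommodating Edge ℬ ∧ NonDegenerate ℬ ∧
    ∀ ℬ' : Set (Set V), Accommodating Edge ℬ' → NonDegenerate ℬ' → ℬ ⊆ ℬ'

/-- `x_{[1,n]}`: the length-`n` prefix of an infinite word. -/
def wordPrefix (x : ℕ → Λ) (n : ℕ) : List Λ := List.ofFn fun i : Fin n => x i.val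

/-- `x` lies in the closure of `L(E^∞)`: all finite prefixes are labeled paths. -/
def InfWord (Edge : V → Λ → V → Prop) (x : ℕ → Λ) : Prop :=
  ∀ n : ℕ, 1 ≤ n → IsLP Edge (wordPrefix x n)

/-- Strong cofinality of a labeled space. -/
def StrCofinal (Edge : V → Λ → V → Prop) (ℬ : Set (Set V)) : Prop :=
  ∀ A ∈ ℬ, A.Nonempty → ∀ x : ℕ → Λ, InfWord Edge x →
    ∃ N : ℕ, 1 ≤ N ∧ ∃ l : List (List Λ), (∀ α ∈ l, IsLP Edge α) ∧
      lrange Edge (wordPrefix x N) ⊆ ⋃ α ∈ l, relRange Edge A α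

/-- Minimality: the only hereditary saturated subsets of `ℬ` are `{∅}` and `ℬ`. -/
def MinimalLS (Edge : V → Λ → V → Prop) (ℬ : Set (Set V)) : Prop :=
  ∀ H : Set (Set V), Hered Edge ℬ H → Satur Edge ℬ H → H ⊆ {∅} ∨ H = ℬ

/-- `L(SEⁿ)`: labels of paths of length `n` with source in `S`. -/
def labelsOfLen (Edge : V → Λ → V → Prop) (S : Set V) (n : ℕ) : Set (List Λ) :=
  {β | β.length = n ∧ (relRange Edge S β).Nonempty}

/-- The labeled space is disagreeable. -/
def Disagreeable (Edge : V → Λ → V → Prop) (ℬ : Set (Set V)) : Prop :=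
  ∀ A ∈ ℬ, A.Nonempty → ∀ β : List Λ, IsLP Edge β →
    ∃ n : ℕ, 1 ≤ n ∧ labelsOfLen Edge A (β.length * n) ≠ {(List.replicate n β).flatten}

/-- `(α, A)` is a cycle. -/
def IsCycle (Edge : V → Λ → V → Prop) (ℬ : Set (Set V)) (α : List Λ) (A : Set V) : Prop :=
  IsLP Edge α ∧ A ∈ ℬ ∧ A.Nonempty ∧ ∀ B ∈ ℬ, B ⊆ A → relRange Edge B α = B

/-- The cycle `(α, A)` has an exit. -/
def CycleHasExit (Edge : V → Λ → V → Prop) (ℬ : Set (Set V)) (α : List Λ) (A : Set V) : Prop :=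
  ∃ t : ℕ, 1 ≤ t ∧ t ≤ α.length ∧ ∃ B ∈ ℬ, B.Nonempty ∧
    B ⊆ relRange Edge A (α.take t) ∧
    edgeLabels Edge B ≠ {a : Λ | α[t % α.length]? = some a}

/-- The cycle `(α, A)` has no exits. -/
def CycleNoExit (Edge : V → Λ → V → Prop) (ℬ : Set (Set V)) (α : List Λ) (A : Set V) : Prop :=
  ∀ t : ℕ, 1 ≤ t → t ≤ α.length → ∀ B ∈ ℬ, B.Nonempty →
    B ⊆ relRange Edge A (α.take t) →
    RegularSet Edge ℬ B ∧ edgeLabels Edge B = {a : Λ | α[t % α.length]? = some a}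

/-- Condition (L): every cycle has an exit. -/
def CondL (Edge : V → Λ → V → Prop) (ℬ : Set (Set V)) : Prop :=
  ∀ (α : List Λ) (A : Set V), IsCycle Edge ℬ α A → CycleHasExit Edge ℬ α A

/-- `α` is a loop at `A`. -/
def IsLoop (Edge : V → Λ → V → Prop) (α : List Λ) (A : Set V) : Prop :=
  IsLP Edge α ∧ A ⊆ relRange Edge A α

/-- The loop `(α, A)` has an exit. -/
def LoopHasExit (Edge : V → Λ → V → Prop) (α : List Λ) (A : Set V) : Prop :=
  {β : List Λ | ∃ k : ℕ, 1 ≤ k ∧ k ≤ α.length ∧ β = α.take k} ⊂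
      {β : List Λ | 1 ≤ β.length ∧ β.length ≤ α.length ∧ (relRange Edge A β).Nonempty} ∨
    A ⊂ relRange Edge A α

/-- `β` is an irreducible path: not a repetition of a proper initial path. -/
def IrreduciblePath (β : List Λ) : Prop :=
  ∀ k : ℕ, 1 ≤ k → k < β.length → ∀ m : ℕ, β ≠ (List.replicate m (β.take k)).flatten

/-- The generalized vertex `[v]_l`. -/
def gvClass (Edge : V → Λ → V → Prop) (l : ℕ) (v : V) : Set V :=
  {w | ∀ β : List Λ, 1 ≤ β.length → β.length ≤ l → (v ∈ lrange Edge β ↔ w ∈ lrange Edge β)}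

/-- `s(x)`: sources of infinite paths labeled by `x`. -/
def srcInf (Edge : V → Λ → V → Prop) (x : ℕ → Λ) : Set V :=
  {w | ∃ p : ℕ → V, p 0 = w ∧ ∀ n : ℕ, Edge (p n) (x n) (p (n + 1))}


theorem relRange_append_aux (Edge : V → Λ → V → Prop) (S : Set V) (γ δ : List Λ) :
    relRange Edge S (γ ++ δ) = relRange Edge (relRange Edge S γ) δ := by
  induction γ generalizing S with
  | nil => rfl
  | cons a γ ih => simp only [List.cons_append, relRange]; exact ih _

theorem relRange_empty_aux (Edge : V → Λ → V → Prop) (γ : List Λ) :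
    relRange Edge (∅ : Set V) γ = ∅ := by
  induction γ with
  | nil => rfl
  | cons a γ ih =>
    have : {w | ∃ u ∈ (∅ : Set V), Edge u a w} = (∅ : Set V) := by simp
    simp only [relRange, this, ih]

theorem nonempty_of_relRange_aux (Edge : V → Λ → V → Prop) (S : Set V) (γ : List Λ)
    (h : (relRange Edge S γ).Nonempty) : S.Nonempty := by
  by_contra hS
  rw [Set.not_nonempty_iff_eq_empty] at hS
  rw [hS, relRange_empty_aux] at h
  exact Set.not_nonempty_empty h

/-- a disagreeable labeled space has the property that every loop has an
exit. -/
theorem disagreeable_implies_loops_have_exits (Edge : V → Λ → V → Prop) (ℰ : Set (Set V))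
    (hsm : SmallestAccom Edge ℰ) (hwlr : WLR Edge ℰ)
    (hdis : Disagreeable Edge ℰ) :
    ∀ A ∈ ℰ, A.Nonempty → ∀ α : List Λ, IsLoop Edge α A → LoopHasExit Edge α A := by
  intro A hA hAne α hloop
  obtain ⟨hlp, hsubR⟩ := hloop
  have hαne : α ≠ [] := hlp.1
  have hαlen : 1 ≤ α.length := List.length_pos_iff.mpr hαne
  by_contra hnoexit
  rw [LoopHasExit, not_or] at hnoexit
  obtain ⟨h1, h2⟩ := hnoexit
  -- r(A, α) = A
  have hRA : relRange Edge A α = A := by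
    by_contra hne
    exact h2 (ssubset_of_subset_of_ne hsubR (Ne.symm hne))
  -- prefixes of α form a subset of the nonempty-range paths
  have hS1S2 : {β : List Λ | ∃ k : ℕ, 1 ≤ k ∧ k ≤ α.length ∧ β = α.take k} ⊆
      {β : List Λ | 1 ≤ β.length ∧ β.length ≤ α.length ∧ (relRange Edge A β).Nonempty} := by
    rintro β ⟨k, hk1, hk2, rfl⟩
    have hlen : (α.take k).length = k := by
      rw [List.length_take]; omega
    refine ⟨by omega, by omega, ?_⟩
    have : (relRange Edge (relRange Edge A (α.take k)) (α.drop k)).Nonempty := by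
      rw [← relRange_append_aux, List.take_append_drop, hRA]; exact hAne
    exact nonempty_of_relRange_aux Edge _ _ this
  have hS2S1 : {β : List Λ | 1 ≤ β.length ∧ β.length ≤ α.length ∧ (relRange Edge A β).Nonempty} ⊆
      {β : List Λ | ∃ k : ℕ, 1 ≤ k ∧ k ≤ α.length ∧ β = α.take k} := by
    by_contra hns
    exact h1 ⟨hS1S2, hns⟩
  -- any path of length α.length with nonempty range from A is α
  have hkey : ∀ β : List Λ, β.length = α.length → (relRange Edge A β).Nonempty → β = α := by
    intro β hβl hβne
    obtain ⟨k, hk1, hk2, heq⟩ := hS2S1 ⟨by omega, by omega, hβne⟩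
    have : k = α.length := by
      have := heq ▸ hβl
      rw [List.length_take] at this; omega
    rw [heq, this, List.take_length]
  -- main claim
  have hmain : ∀ n : ℕ, ∀ β : List Λ, β.length = α.length * n →
      (relRange Edge A β).Nonempty → β = (List.replicate n α).flatten := by
    intro n
    induction n with
    | zero =>
      intro β hβl _
      have h0 : β.length = 0 := by simpa using hβl
      simp [List.length_eq_zero_iff.mp h0]
    | succ n ih =>
      intro β hβl hβne
      have hge : α.length ≤ β.length := by rw [hβl]; nlinarith
      have hdec : β = β.take α.length ++ β.drop α.length := (List.take_append_drop _ _).symm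
      have h1len : (β.take α.length).length = α.length := by
        rw [List.length_take]; omega
      have hβne' : (relRange Edge (relRange Edge A (β.take α.length)) (β.drop α.length)).Nonempty := by
        rw [← relRange_append_aux, ← hdec]; exact hβne
      have htake : β.take α.length = α :=
        hkey _ h1len (nonempty_of_relRange_aux Edge _ _ hβne')
      rw [htake, hRA] at hβne'
      have hdlen : (β.drop α.length).length = α.length * n := by
        rw [List.length_drop, hβl]; ring_nf; omega
      have := ih _ hdlen hβne'
      rw [List.replicate_succ]
      show β = α ++ (List.replicate n α).flatten
      calc β = List.take α.length β ++ List.drop α.length β := hdec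
        _ = α ++ (List.replicate n α).flatten := by rw [htake, this]
  -- the reverse inclusion: replicate join has nonempty range
  have hrep : ∀ n : ℕ, relRange Edge A (List.replicate n α).flatten = A := by
    intro n
    induction n with
    | zero => rfl
    | succ n ih =>
      rw [List.replicate_succ]
      show relRange Edge A (α ++ (List.replicate n α).flatten) = A
      rw [relRange_append_aux, hRA, ih]
  -- apply disagreeable
  obtain ⟨n, hn1, hne⟩ := hdis A hA hAne α hlp
  apply hne
  ext β
  simp only [labelsOfLen, Set.mem_setOf_eq, Set.mem_singleton_iff]
  constructor
  · rintro ⟨hlen, hnonempty⟩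
    exact hmain n β hlen hnonempty
  · rintro rfl
    constructor
    · rw [List.length_flatten]
      simp [List.map_replicate, List.sum_replicate, Nat.mul_comm]
    · rw [hrep]; exact hAne
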